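/- Let [n] = I ∪ J be a partition into disjoint sets and W ⊆ ℝⁿ a linear subspace. Then π_J(W⊥) ∩ π_J(W) = im(ℓ_I^W), i.e., the set {(L_I^W(x))_J : x ∈ ℝ^I} equals the intersection of the subspaces π_J(W⊥) and π_J(W) of ℝ^J. -/

import Mathlib

open scoped RealInnerProductSpace

/-- The coordinate projection `π_I : ℝⁿ → ℝ^I` as a linear map. -/
noncomputable def coordRestrict {n : ℕ} (I : Finset (Fin n)) :
    EuclideanSpace ℝ (Fin n) →ₗ[ℝ] EuclideanSpace ℝ {i : Fin n // i ∈ I} where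
  toFun x := WithLp.toLp 2 (fun i => x i.1)
  map_add' _ _ := rfl
  map_smul' _ _ := rfl

lemma coordRestrict_apply {n : ℕ} (I : Finset (Fin n)) (x : EuclideanSpace ℝ (Fin n))
    (i : {i : Fin n // i ∈ I}) : (coordRestrict I x) i = x i.1 := rfl

/-- Extension by zero `ℝ^J → ℝⁿ`. -/
noncomputable def coordExtend {n : ℕ} (J : Finset (Fin n)) :
    EuclideanSpace ℝ {i : Fin n // i ∈ J} →ₗ[ℝ] EuclideanSpace ℝ (Fin n) where
  toFun y := WithLp.toLp 2 (fun i => if h : i ∈ J then y ⟨i, h⟩ else 0)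
  map_add' y z := by
    ext i
    by_cases h : i ∈ J <;> simp [h]
  map_smul' c y := by
    ext i
    by_cases h : i ∈ J <;> simp [h]

lemma inner_coordExtend {n : ℕ} (J : Finset (Fin n))
    (y : EuclideanSpace ℝ {i : Fin n // i ∈ J}) (v : EuclideanSpace ℝ (Fin n)) :
    ⟪coordExtend J y, v⟫ = ⟪y, coordRestrict J v⟫ := by
  simp only [PiLp.inner_apply, RCLike.inner_apply, conj_trivial]
  simp only [mul_comm (v.ofLp _), mul_comm (((coordRestrict J) v).ofLp _)]
  have h1 : ∑ i : Fin n, coordExtend J y i * v i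
      = ∑ i ∈ J, coordExtend J y i * v i := by
    rw [← Finset.sum_subset (Finset.subset_univ J)]
    intro i _ hi
    simp [coordExtend, hi]
  rw [h1, Finset.sum_subtype J (fun i => Iff.rfl) (fun i => coordExtend J y i * v i)]
  apply Finset.sum_congr rfl
  intro i _
  simp [coordExtend, coordRestrict_apply, i.2]

lemma coordRestrict_coordExtend {n : ℕ} (J : Finset (Fin n))
    (y : EuclideanSpace ℝ {i : Fin n // i ∈ J}) :
    coordRestrict J (coordExtend J y) = y := by
  ext i
  simp [coordExtend, coordRestrict_apply, i.2]

lemma coordRestrict_coordExtend_disjoint {n : ℕ} {I J : Finset (Fin n)}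
    (hdisj : Disjoint I J) (y : EuclideanSpace ℝ {i : Fin n // i ∈ J}) :
    coordRestrict I (coordExtend J y) = 0 := by
  ext i
  have : i.1 ∉ J := fun h => (Finset.disjoint_left.mp hdisj i.2) h
  simp [coordExtend, coordRestrict_apply, this]

lemma coordExtend_coordRestrict {n : ℕ} {I J : Finset (Fin n)}
    (hIJ : I ∪ J = Finset.univ) (v : EuclideanSpace ℝ (Fin n))
    (hv : coordRestrict I v = 0) :
    coordExtend J (coordRestrict J v) = v := by
  ext i
  by_cases h : i ∈ J
  · simp [coordExtend, coordRestrict_apply, h]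
  · have hi : i ∈ I := by
      have : i ∈ I ∪ J := hIJ ▸ Finset.mem_univ i
      rcases Finset.mem_union.mp this with h' | h'
      · exact h'
      · exact absurd h' h
    have := congrArg (fun f : EuclideanSpace ℝ {i : Fin n // i ∈ I} => f ⟨i, hi⟩) hv
    simpa [coordExtend, coordRestrict_apply, h] using this.symm

/-- `L` is the lifting map `L_I^W : ℝ^I → W`: for every `x`, `L x` is the minimum-norm
element of `{w ∈ W : w_I = Π_{π_I(W)}(x)}` (equivalently, of
`{w ∈ W : w_I - x ∈ (π_I(W))ᗮ}`). -/
def IsLiftingMap {n : ℕ} (I : Finset (Fin n)) (W : Submodule ℝ (EuclideanSpace ℝ (Fin n)))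
    (L : EuclideanSpace ℝ {i : Fin n // i ∈ I} →ₗ[ℝ] EuclideanSpace ℝ (Fin n)) : Prop :=
  ∀ x, (L x ∈ W ∧ coordRestrict I (L x) - x ∈ (W.map (coordRestrict I))ᗮ) ∧
    ∀ w ∈ W, coordRestrict I w - x ∈ (W.map (coordRestrict I))ᗮ → ‖L x‖ ≤ ‖w‖

/-- inner product identity with one side supported on J -/
lemma inner_proj {n : ℕ} {I J : Finset (Fin n)}
    (hIJ : I ∪ J = Finset.univ) (v a : EuclideanSpace ℝ (Fin n))
    (hv : coordRestrict I v = 0) :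
    ⟪coordRestrict J v, coordRestrict J a⟫ = ⟪v, a⟫ := by
  conv_rhs => rw [← coordExtend_coordRestrict hIJ v hv]
  rw [inner_coordExtend]

lemma inner_zero_of_min {E : Type*} [NormedAddCommGroup E] [InnerProductSpace ℝ E]
    (v w : E) (h : ∀ t : ℝ, ‖v‖ ≤ ‖v + t • w‖) : ⟪v, w⟫ = 0 := by
  by_contra hc
  have hw : w ≠ 0 := by
    rintro rfl; exact hc (inner_zero_right v)
  have hw2 : (0:ℝ) < ‖w‖^2 := pow_pos (norm_pos_iff.mpr hw) 2
  set c := ⟪v, w⟫ with hcdef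
  set t : ℝ := -c / ‖w‖^2 with ht
  have hexp : ‖v + t • w‖^2 = ‖v‖^2 + 2*(t*c) + t^2*‖w‖^2 := by
    rw [norm_add_sq_real, real_inner_smul_right, norm_smul, mul_pow, Real.norm_eq_abs, sq_abs]
  have hle := h t
  have hle2 : ‖v‖^2 ≤ ‖v + t • w‖^2 := by
    apply pow_le_pow_left₀ (norm_nonneg v) hle
  rw [hexp, ht] at hle2
  have hc2 : (0:ℝ) < c^2 := lt_of_le_of_ne (sq_nonneg c) (Ne.symm (pow_ne_zero 2 hc))
  have : ‖v‖^2 + 2*((-c/‖w‖^2)*c) + ((-c/‖w‖^2))^2*‖w‖^2 = ‖v‖^2 - c^2/‖w‖^2 := by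
    field_simp; ring
  rw [this] at hle2
  nlinarith [div_pos hc2 hw2]

lemma lifting_orth {n : ℕ} {I : Finset (Fin n)} {W : Submodule ℝ (EuclideanSpace ℝ (Fin n))}
    {L : EuclideanSpace ℝ {i : Fin n // i ∈ I} →ₗ[ℝ] EuclideanSpace ℝ (Fin n)}
    (hL : IsLiftingMap I W L) (x : EuclideanSpace ℝ {i : Fin n // i ∈ I})
    (v : EuclideanSpace ℝ (Fin n)) (hvW : v ∈ W) (hvI : coordRestrict I v = 0) :
    ⟪L x, v⟫ = 0 := by
  apply inner_zero_of_min
  intro t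
  apply (hL x).2 (L x + t • v) (W.add_mem (hL x).1.1 (W.smul_mem t hvW))
  have : coordRestrict I (L x + t • v) = coordRestrict I (L x) := by
    rw [map_add, map_smul, hvI, smul_zero, add_zero]
  rw [this]
  exact (hL x).1.2

/-- duality: `(π_J V)ᗮ = π_J (Vᗮ ∩ ker π_I)` -/
lemma orth_map {n : ℕ} {I J : Finset (Fin n)}
    (hIJ : I ∪ J = Finset.univ) (hdisj : Disjoint I J)
    (V : Submodule ℝ (EuclideanSpace ℝ (Fin n))) :
    (V.map (coordRestrict J))ᗮ
      = (Vᗮ ⊓ LinearMap.ker (coordRestrict I)).map (coordRestrict J) := by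
  ext y
  constructor
  · intro hy
    refine ⟨coordExtend J y, ⟨?_, ?_⟩, coordRestrict_coordExtend J y⟩
    · rw [SetLike.mem_coe, Submodule.mem_orthogonal]
      intro v hv
      rw [real_inner_comm, inner_coordExtend]
      exact (Submodule.mem_orthogonal' _ y).mp hy _ ⟨v, hv, rfl⟩
    · exact coordRestrict_coordExtend_disjoint hdisj y
  · rintro ⟨u, ⟨huV, huI⟩, rfl⟩
    rw [Submodule.mem_orthogonal]
    rintro _ ⟨v, hv, rfl⟩
    rw [real_inner_comm, inner_proj hIJ u v huI]
    exact (Submodule.mem_orthogonal' V u).mp huV v hv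

theorem statement8 (n : ℕ) (I J : Finset (Fin n))
    (hIJ : I ∪ J = Finset.univ) (hdisj : Disjoint I J)
    (W : Submodule ℝ (EuclideanSpace ℝ (Fin n)))
    (L : EuclideanSpace ℝ {i : Fin n // i ∈ I} →ₗ[ℝ] EuclideanSpace ℝ (Fin n))
    (hL : IsLiftingMap I W L) :
    Wᗮ.map (coordRestrict J) ⊓ W.map (coordRestrict J) =
      LinearMap.range ((coordRestrict J).comp L) := by
  have hWJ : Wᗮ.map (coordRestrict J)
      = ((W ⊓ LinearMap.ker (coordRestrict I)).map (coordRestrict J))ᗮ := by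
    have h1 := orth_map hIJ hdisj (Wᗮ)
    rw [Submodule.orthogonal_orthogonal] at h1
    rw [← h1, Submodule.orthogonal_orthogonal]
  rw [hWJ]
  apply le_antisymm
  · rintro y hy
    obtain ⟨hy1, hy2⟩ := Submodule.mem_inf.mp hy
    obtain ⟨w, hwW, rfl⟩ := hy2
    set x := coordRestrict I w with hx
    refine ⟨x, ?_⟩
    -- show coordRestrict J (L x) = coordRestrict J w
    set d := w - L x with hd
    have hd1 : d ∈ W := W.sub_mem hwW (hL x).1.1
    have hI0 : coordRestrict I (L x) - x = 0 := by
      have hmem : coordRestrict I (L x) - x ∈ W.map (coordRestrict I) :=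
        Submodule.sub_mem _ ⟨L x, (hL x).1.1, rfl⟩ ⟨w, hwW, rfl⟩
      exact Submodule.disjoint_def.mp (Submodule.orthogonal_disjoint (W.map (coordRestrict I)))
        _ hmem (hL x).1.2
    have hd2 : coordRestrict I d = 0 := by
      rw [hd, map_sub]
      rw [sub_eq_zero] at hI0 ⊢
      exact hI0.symm
    have hdmem : coordRestrict J d ∈ (W ⊓ LinearMap.ker (coordRestrict I)).map (coordRestrict J) :=
      ⟨d, ⟨hd1, hd2⟩, rfl⟩
    have h2 : ⟪coordRestrict J d, coordRestrict J w⟫ = 0 :=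
      (Submodule.mem_orthogonal _ _).mp hy1 _ hdmem
    have h3 : ⟪coordRestrict J d, coordRestrict J (L x)⟫ = 0 := by
      rw [inner_proj hIJ d (L x) hd2, real_inner_comm]
      exact lifting_orth hL x d hd1 hd2
    have h4 : ⟪coordRestrict J d, coordRestrict J d⟫ = (0:ℝ) := by
      have : (coordRestrict J d : EuclideanSpace ℝ {i : Fin n // i ∈ J})
          = coordRestrict J w - coordRestrict J (L x) := by
        rw [hd, map_sub]
      rw [this, inner_sub_right, ← this, h2, h3, sub_zero]
    have h5 : coordRestrict J d = 0 := by
      exact inner_self_eq_zero.mp h4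
    rw [hd, map_sub, sub_eq_zero] at h5
    exact h5.symm
  · rintro _ ⟨x, rfl⟩
    rw [Submodule.mem_inf]
    constructor
    · rw [Submodule.mem_orthogonal]
      rintro _ ⟨v, ⟨hvW, hvI⟩, rfl⟩
      simp only [LinearMap.coe_comp, Function.comp_apply]
      rw [inner_proj hIJ v (L x) hvI, real_inner_comm]
      exact lifting_orth hL x v hvW hvI
    · exact ⟨L x, (hL x).1.1, rfl⟩
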